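/- Let R be a commutative k-algebra and g a Lie superalgebra over k with a 2-operation (·)^⟨2⟩ : g₁ → g₀, where g₁ is free as a k-module. Then there exists a unique map q : R ⊗ g₁ → R ⊗ g₀ such that q(Σᵢ cᵢ⊗vᵢ) = Σᵢ cᵢ²⊗vᵢ^⟨2⟩ + Σ_{i<j} cᵢcⱼ⊗[vᵢ,vⱼ] for every element Σᵢ cᵢ⊗vᵢ of R ⊗ g₁ (any finite presentation), and this q is a 2-operation on the Lie superalgebra g_R = R ⊗ g over R. -/

import Mathlib

open TensorProduct

private lemma quad_map_sum {R M N ι : Type*} [CommRing R] [AddCommGroup M] [AddCommGroup N]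
    [Module R M] [Module R N] [LinearOrder ι]
    (B : M →ₗ[R] M →ₗ[R] N) (hB : ∀ u w : M, B u w = B w u)
    (q : M → N) (hq : ∀ u w : M, q (u + w) = q u + B u w + q w)
    (s : Finset ι) (u : ι → M) :
    q (∑ i ∈ s, u i) = (∑ i ∈ s, q (u i)) +
      ∑ p ∈ (s ×ˢ s).filter (fun p => p.1 < p.2), B (u p.1) (u p.2) := by
  classical
  have hq0 : q 0 = 0 := by
    have h := hq 0 0
    simp only [add_zero, map_zero, LinearMap.zero_apply] at h
    exact (left_eq_add.mp h)
  rw [Finset.sum_filter, Finset.sum_product]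
  induction s using Finset.cons_induction with
  | empty => simpa using hq0
  | cons a s ha ih =>
    rw [Finset.sum_cons, hq, ih, map_sum]
    simp only [Finset.sum_cons, if_neg (lt_irrefl a), zero_add, Finset.sum_add_distrib]
    have key : (∑ j ∈ s, B (u a) (u j)) =
        (∑ j ∈ s, if a < j then B (u a) (u j) else 0) +
        ∑ j ∈ s, if j < a then B (u j) (u a) else 0 := by
      rw [← Finset.sum_add_distrib]
      refine Finset.sum_congr rfl fun j hj => ?_
      rcases lt_trichotomy a j with h | h | h
      · rw [if_pos h, if_neg (asymm h), add_zero]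
      · exact absurd (h ▸ hj) ha
      · rw [if_neg (asymm h), if_pos h, zero_add, hB]
    rw [key]
    abel

private lemma quad_map_sum_smul {R M N ι : Type*} [CommRing R] [AddCommGroup M] [AddCommGroup N]
    [Module R M] [Module R N] [LinearOrder ι]
    (B : M →ₗ[R] M →ₗ[R] N) (hB : ∀ u w : M, B u w = B w u)
    (q : M → N) (hq : ∀ u w : M, q (u + w) = q u + B u w + q w)
    (hqs : ∀ (r : R) (u : M), q (r • u) = (r * r) • q u)
    (s : Finset ι) (c : ι → R) (u : ι → M) :
    q (∑ i ∈ s, c i • u i) = (∑ i ∈ s, (c i * c i) • q (u i)) +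
      ∑ p ∈ (s ×ˢ s).filter (fun p => p.1 < p.2), (c p.1 * c p.2) • B (u p.1) (u p.2) := by
  rw [quad_map_sum B hB q hq s (fun i => c i • u i)]
  congr 1
  · exact Finset.sum_congr rfl fun i _ => hqs (c i) (u i)
  · refine Finset.sum_congr rfl fun p _ => ?_
    rw [LinearMap.map_smul₂, map_smul, smul_smul]

private lemma double_sum_split {ι N : Type*} [LinearOrder ι] [AddCommGroup N]
    (s : Finset ι) (F : ι → ι → N) :
    ∑ i ∈ s, ∑ j ∈ s, F i j =
      (∑ i ∈ s, F i i) +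
      ∑ p ∈ (s ×ˢ s).filter (fun p => p.1 < p.2), (F p.1 p.2 + F p.2 p.1) := by
  classical
  rw [Finset.sum_filter, Finset.sum_product]
  have step : ∀ i ∈ s, ∑ j ∈ s, F i j =
      F i i + ((∑ j ∈ s, if i < j then F i j else 0) +
        ∑ j ∈ s, if j < i then F i j else 0) := by
    intro i hi
    have hpt : ∀ j ∈ s, F i j = (if j = i then F i j else 0) +
        ((if i < j then F i j else 0) + if j < i then F i j else 0) := by
      intro j _
      rcases lt_trichotomy i j with h | h | h
      · rw [if_neg h.ne', if_pos h, if_neg (asymm h), zero_add, add_zero]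
      · subst h; simp [lt_irrefl]
      · rw [if_neg h.ne, if_neg (asymm h), if_pos h, zero_add, zero_add]
    rw [Finset.sum_congr rfl hpt, Finset.sum_add_distrib, Finset.sum_add_distrib,
      Finset.sum_ite_eq' s i (F i), if_pos hi]
  have h1 : ∑ i ∈ s, ∑ j ∈ s, F i j
      = (∑ i ∈ s, F i i) + ((∑ i ∈ s, ∑ j ∈ s, if i < j then F i j else 0) +
        ∑ i ∈ s, ∑ j ∈ s, if j < i then F i j else 0) := by
    rw [← Finset.sum_add_distrib, ← Finset.sum_add_distrib]
    exact Finset.sum_congr rfl step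
  have h2 : (∑ i ∈ s, ∑ j ∈ s, if j < i then F i j else 0)
      = ∑ i ∈ s, ∑ j ∈ s, if i < j then F j i else 0 := Finset.sum_comm
  have h3 : (∑ i ∈ s, ∑ j ∈ s, if i < j then F i j + F j i else 0)
      = (∑ i ∈ s, ∑ j ∈ s, if i < j then F i j else 0) +
        ∑ i ∈ s, ∑ j ∈ s, if i < j then F j i else 0 := by
    rw [← Finset.sum_add_distrib]
    refine Finset.sum_congr rfl fun i _ => ?_
    rw [← Finset.sum_add_distrib]
    refine Finset.sum_congr rfl fun j _ => ?_
    split <;> simp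
  rw [h1, h2, h3]

set_option maxHeartbeats 2000000 in
theorem base_extension_two_operation
    (k : Type*) [CommRing k] (R : Type*) [CommRing R] [Algebra k R]
    (g0 g1 : Type*) [AddCommGroup g0] [AddCommGroup g1]
    [Module k g0] [Module k g1] [Module.Free k g1]
    (b00 : g0 →ₗ[k] g0 →ₗ[k] g0) (b10 : g1 →ₗ[k] g0 →ₗ[k] g1)
    (b11 : g1 →ₗ[k] g1 →ₗ[k] g0)
    (hb11symm : ∀ v w : g1, b11 v w = b11 w v)
    (sq : g1 → g0)
    -- `sq` is a 2-operation on `g`: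
    (hsq1 : ∀ (c : k) (v : g1), sq (c • v) = (c * c) • sq v)
    (hsq2 : ∀ v w : g1, sq (v + w) = sq v + b11 v w + sq w)
    (hsq3 : ∀ (v : g1) (x : g0), b00 (sq v) x = b11 v (b10 v x))
    (hsq4 : ∀ v w : g1, - b10 w (sq v) = b10 v (b11 v w))
    -- the base-extended brackets on `g_R`:
    (B00 : R ⊗[k] g0 →ₗ[R] R ⊗[k] g0 →ₗ[R] R ⊗[k] g0)
    (B10 : R ⊗[k] g1 →ₗ[R] R ⊗[k] g0 →ₗ[R] R ⊗[k] g1)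
    (B11 : R ⊗[k] g1 →ₗ[R] R ⊗[k] g1 →ₗ[R] R ⊗[k] g0)
    (hB00 : ∀ (c d : R) (x y : g0),
      B00 (c ⊗ₜ[k] x) (d ⊗ₜ[k] y) = (c * d) ⊗ₜ[k] b00 x y)
    (hB10 : ∀ (c d : R) (v : g1) (x : g0),
      B10 (c ⊗ₜ[k] v) (d ⊗ₜ[k] x) = (c * d) ⊗ₜ[k] b10 v x)
    (hB11 : ∀ (c d : R) (v w : g1),
      B11 (c ⊗ₜ[k] v) (d ⊗ₜ[k] w) = (c * d) ⊗ₜ[k] b11 v w) :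
    ∃ q : R ⊗[k] g1 → R ⊗[k] g0,
      -- the defining formula, for every finite presentation
      (∀ (n : ℕ) (c : Fin n → R) (vv : Fin n → g1),
        q (∑ i, (c i) ⊗ₜ[k] (vv i)) =
          (∑ i, (c i * c i) ⊗ₜ[k] sq (vv i)) +
          ∑ p ∈ Finset.univ.filter (fun p : Fin n × Fin n => p.1 < p.2),
            (c p.1 * c p.2) ⊗ₜ[k] b11 (vv p.1) (vv p.2)) ∧
      -- uniqueness
      (∀ q' : R ⊗[k] g1 → R ⊗[k] g0,
        (∀ (n : ℕ) (c : Fin n → R) (vv : Fin n → g1),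
          q' (∑ i, (c i) ⊗ₜ[k] (vv i)) =
            (∑ i, (c i * c i) ⊗ₜ[k] sq (vv i)) +
            ∑ p ∈ Finset.univ.filter (fun p : Fin n × Fin n => p.1 < p.2),
              (c p.1 * c p.2) ⊗ₜ[k] b11 (vv p.1) (vv p.2)) →
        q' = q) ∧
      -- `q` is a 2-operation on `g_R`:
      (∀ (r : R) (u : R ⊗[k] g1), q (r • u) = (r * r) • q u) ∧
      (∀ u w : R ⊗[k] g1, q (u + w) = q u + B11 u w + q w) ∧
      (∀ (u : R ⊗[k] g1) (x : R ⊗[k] g0), B00 (q u) x = B11 u (B10 u x)) ∧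
      (∀ u w : R ⊗[k] g1, - B10 w (q u) = B10 u (B11 u w)) := by
  classical
  letI : LinearOrder (Module.Free.ChooseBasisIndex k g1) :=
    IsWellOrder.linearOrder WellOrderingRel
  let b : Module.Basis (Module.Free.ChooseBasisIndex k g1) k g1 := Module.Free.chooseBasis k g1
  let bR : Module.Basis (Module.Free.ChooseBasisIndex k g1) R (R ⊗[k] g1) :=
    Algebra.TensorProduct.basis R b
  have hbR : ∀ (a : R) (i), a • bR i = a ⊗ₜ[k] b i := fun a i =>
    Algebra.TensorProduct.basis_repr_symm_apply' b a i
  -- derived identities in `g`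
  have bdiag : ∀ v : g1, b11 v v = (2 : k) • sq v := by
    intro v
    have h1 := hsq2 v v
    rw [← two_smul k v, hsq1 2 v] at h1
    have h2 : b11 v v = ((2 : k) * 2) • sq v - sq v - sq v := by rw [h1]; abel
    rw [h2, show ((2 : k) * 2) = 2 + 2 by norm_num, add_smul, two_smul]
    abel
  have hsq3' : ∀ (v w : g1) (x : g0),
      b00 (b11 v w) x = b11 v (b10 w x) + b11 w (b10 v x) := by
    intro v w x
    have h := hsq3 (v + w) x
    rw [hsq2 v w] at h
    have e1 : b00 (sq v + b11 v w + sq w) x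
        = b00 (sq v) x + b00 (b11 v w) x + b00 (sq w) x := by
      simp only [map_add, LinearMap.add_apply]
    have e2 : b11 (v + w) (b10 (v + w) x)
        = b11 v (b10 v x) + b11 v (b10 w x) + b11 w (b10 v x) + b11 w (b10 w x) := by
      simp only [map_add, LinearMap.add_apply]
      abel
    rw [e1, e2, hsq3 v x, hsq3 w x] at h
    have h3 : b11 v (b10 v x) + b00 (b11 v w) x + b11 w (b10 w x)
        = b11 v (b10 v x) + (b11 v (b10 w x) + b11 w (b10 v x)) + b11 w (b10 w x) := by
      rw [h]; abel
    exact add_left_cancel (add_right_cancel h3)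
  have hsq4' : ∀ (v v' w : g1),
      - b10 w (b11 v v') = b10 v (b11 v' w) + b10 v' (b11 v w) := by
    intro v v' w
    have h := hsq4 (v + v') w
    rw [hsq2 v v'] at h
    have e1 : - b10 w (sq v + b11 v v' + sq v')
        = - b10 w (sq v) + - b10 w (b11 v v') + - b10 w (sq v') := by
      simp only [map_add]
      abel
    have e2 : b10 (v + v') (b11 (v + v') w)
        = b10 v (b11 v w) + b10 v (b11 v' w) + b10 v' (b11 v w) + b10 v' (b11 v' w) := by
      simp only [map_add, LinearMap.add_apply]
      abel
    rw [e1, e2, hsq4 v w, hsq4 v' w] at h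
    have h3 : b10 v (b11 v w) + - b10 w (b11 v v') + b10 v' (b11 v' w)
        = b10 v (b11 v w) + (b10 v (b11 v' w) + b10 v' (b11 v w)) + b10 v' (b11 v' w) := by
      rw [h]; abel
    exact add_left_cancel (add_right_cancel h3)
  have HB11symm : ∀ u w : R ⊗[k] g1, B11 u w = B11 w u := by
    intro u w
    induction u using TensorProduct.induction_on with
    | zero => simp
    | tmul c v =>
      induction w using TensorProduct.induction_on with
      | zero => simp
      | tmul d y => rw [hB11, hB11, hb11symm, mul_comm]
      | add x y hx hy => simp only [map_add, LinearMap.add_apply, hx, hy]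
    | add x y hx hy => simp only [map_add, LinearMap.add_apply, hx, hy]
  -- the map `q`
  let q : R ⊗[k] g1 → R ⊗[k] g0 := fun u =>
    (∑ i ∈ (bR.repr u).support, (bR.repr u i * bR.repr u i) ⊗ₜ[k] sq (b i)) +
    ∑ p ∈ ((bR.repr u).support ×ˢ (bR.repr u).support).filter (fun p => p.1 < p.2),
      (bR.repr u p.1 * bR.repr u p.2) ⊗ₜ[k] b11 (b p.1) (b p.2)
  have hqdef : ∀ u, q u =
      (∑ i ∈ (bR.repr u).support, (bR.repr u i * bR.repr u i) ⊗ₜ[k] sq (b i)) +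
      ∑ p ∈ ((bR.repr u).support ×ˢ (bR.repr u).support).filter (fun p => p.1 < p.2),
        (bR.repr u p.1 * bR.repr u p.2) ⊗ₜ[k] b11 (b p.1) (b p.2) := fun u => rfl
  have hrepsum : ∀ (u : R ⊗[k] g1) (s : Finset (Module.Free.ChooseBasisIndex k g1)),
      (bR.repr u).support ⊆ s → u = ∑ i ∈ s, (bR.repr u i) ⊗ₜ[k] b i := by
    intro u s hs
    have h1 : u = ∑ i ∈ (bR.repr u).support, (bR.repr u i) • bR i := by
      conv_lhs => rw [← bR.linearCombination_repr u]
      rw [Finsupp.linearCombination_apply, Finsupp.sum]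
    conv_lhs => rw [h1]
    rw [Finset.sum_subset hs (fun i _ hi => by
      rw [Finsupp.notMem_support_iff.mp hi, zero_smul])]
    exact Finset.sum_congr rfl fun i _ => hbR _ i
  -- the key formula for presentations in the basis
  have Lq : ∀ (s : Finset (Module.Free.ChooseBasisIndex k g1))
      (c : Module.Free.ChooseBasisIndex k g1 → R),
      q (∑ i ∈ s, c i ⊗ₜ[k] b i) =
        (∑ i ∈ s, (c i * c i) ⊗ₜ[k] sq (b i)) +
        ∑ p ∈ (s ×ˢ s).filter (fun p => p.1 < p.2),
          (c p.1 * c p.2) ⊗ₜ[k] b11 (b p.1) (b p.2) := by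
    intro s c
    have hrepr : bR.repr (∑ i ∈ s, c i ⊗ₜ[k] b i) = ∑ i ∈ s, Finsupp.single i (c i) := by
      rw [show (∑ i ∈ s, c i ⊗ₜ[k] b i) = ∑ i ∈ s, c i • bR i from
        Finset.sum_congr rfl fun i _ => (hbR (c i) i).symm]
      rw [map_sum]
      refine Finset.sum_congr rfl fun i _ => ?_
      rw [map_smul, bR.repr_self, Finsupp.smul_single, smul_eq_mul, mul_one]
    have hFval : ∀ j, (bR.repr (∑ i ∈ s, c i ⊗ₜ[k] b i)) j = if j ∈ s then c j else 0 := by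
      intro j
      rw [hrepr, Finsupp.finset_sum_apply]
      rw [Finset.sum_congr rfl (fun i _ => Finsupp.single_apply)]
      exact Finset.sum_ite_eq' s j c
    have hFsupp : (bR.repr (∑ i ∈ s, c i ⊗ₜ[k] b i)).support ⊆ s := by
      intro j hj
      by_contra hjs
      exact (Finsupp.mem_support_iff.mp hj) (by rw [hFval j, if_neg hjs])
    rw [hqdef]
    rw [Finset.sum_subset hFsupp (fun i _ hi => by
        rw [Finsupp.notMem_support_iff.mp hi, zero_mul, TensorProduct.zero_tmul])]
    rw [Finset.sum_subset
        (Finset.filter_subset_filter _ (Finset.product_subset_product hFsupp hFsupp))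
        (fun p hp hp' => ?_)]
    · congr 1
      · exact Finset.sum_congr rfl fun i hi => by rw [hFval, if_pos hi]
      · refine Finset.sum_congr rfl fun p hp => ?_
        have hp1 : p.1 ∈ s := (Finset.mem_product.mp (Finset.mem_filter.mp hp).1).1
        have hp2 : p.2 ∈ s := (Finset.mem_product.mp (Finset.mem_filter.mp hp).1).2
        rw [hFval, hFval, if_pos hp1, if_pos hp2]
    · have hps := Finset.mem_filter.mp hp
      have hor : p.1 ∉ (bR.repr (∑ i ∈ s, c i ⊗ₜ[k] b i)).support ∨
          p.2 ∉ (bR.repr (∑ i ∈ s, c i ⊗ₜ[k] b i)).support := by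
        by_contra hcon
        push_neg at hcon
        exact hp' (Finset.mem_filter.mpr ⟨Finset.mem_product.mpr ⟨hcon.1, hcon.2⟩, hps.2⟩)
      rcases hor with h | h
      · rw [Finsupp.notMem_support_iff.mp h, zero_mul, TensorProduct.zero_tmul]
      · rw [Finsupp.notMem_support_iff.mp h, mul_zero, TensorProduct.zero_tmul]
  -- scaling
  have Hscale : ∀ (r : R) (u : R ⊗[k] g1), q (r • u) = (r * r) • q u := by
    intro r u
    set f := bR.repr u with hfdef
    have hu : u = ∑ i ∈ f.support, f i ⊗ₜ[k] b i := hrepsum u _ (subset_refl _)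
    have hru : r • u = ∑ i ∈ f.support, (r * f i) ⊗ₜ[k] b i := by
      conv_lhs => rw [hu]
      rw [Finset.smul_sum]
      exact Finset.sum_congr rfl fun i _ => by rw [TensorProduct.smul_tmul', smul_eq_mul]
    rw [hru, Lq]
    conv_rhs => rw [hu, Lq]
    rw [smul_add, Finset.smul_sum, Finset.smul_sum]
    congr 1
    · refine Finset.sum_congr rfl fun i _ => ?_
      rw [TensorProduct.smul_tmul', smul_eq_mul]
      congr 1
      ring
    · refine Finset.sum_congr rfl fun p _ => ?_
      rw [TensorProduct.smul_tmul', smul_eq_mul]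
      congr 1
      ring
  -- additivity (polarization)
  have Hadd : ∀ u w : R ⊗[k] g1, q (u + w) = q u + B11 u w + q w := by
    intro u w
    set f := bR.repr u with hfdef
    set g := bR.repr w with hgdef
    set s := f.support ∪ g.support with hsdef
    have hu : u = ∑ i ∈ s, f i ⊗ₜ[k] b i := hrepsum u s Finset.subset_union_left
    have hw : w = ∑ i ∈ s, g i ⊗ₜ[k] b i := hrepsum w s Finset.subset_union_right
    have huw : u + w = ∑ i ∈ s, (f i + g i) ⊗ₜ[k] b i := by
      rw [Finset.sum_congr rfl (fun i (_ : i ∈ s) => TensorProduct.add_tmul (f i) (g i) (b i)),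
        Finset.sum_add_distrib, ← hu, ← hw]
    have hBuw : B11 u w = (∑ i ∈ s, (f i * g i) ⊗ₜ[k] b11 (b i) (b i)) +
        ∑ p ∈ (s ×ˢ s).filter (fun p => p.1 < p.2),
          ((f p.1 * g p.2) ⊗ₜ[k] b11 (b p.1) (b p.2) +
            (f p.2 * g p.1) ⊗ₜ[k] b11 (b p.2) (b p.1)) := by
      have h1 : B11 u w = ∑ i ∈ s, ∑ j ∈ s, (f i * g j) ⊗ₜ[k] b11 (b i) (b j) := by
        rw [hu, hw, map_sum B11 (fun i => f i ⊗ₜ[k] b i) s, LinearMap.sum_apply]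
        refine Finset.sum_congr rfl fun i _ => ?_
        rw [map_sum]
        exact Finset.sum_congr rfl fun j _ => hB11 _ _ _ _
      rw [h1, double_sum_split]
    rw [hBuw, huw, Lq, hu, Lq, hw, Lq]
    have hsingle : ∀ i ∈ s, ((f i + g i) * (f i + g i)) ⊗ₜ[k] sq (b i) =
        (f i * f i) ⊗ₜ[k] sq (b i) + (f i * g i) ⊗ₜ[k] b11 (b i) (b i) +
          (g i * g i) ⊗ₜ[k] sq (b i) := by
      intro i _
      rw [show (f i + g i) * (f i + g i)
          = (f i * f i) + ((2 : k) • (f i * g i)) + (g i * g i) by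
        rw [Algebra.smul_def, map_ofNat]; ring]
      rw [TensorProduct.add_tmul, TensorProduct.add_tmul, bdiag,
        TensorProduct.tmul_smul, TensorProduct.smul_tmul']
    have hpair : ∀ p ∈ (s ×ˢ s).filter
        (fun p : _ × Module.Free.ChooseBasisIndex k g1 => p.1 < p.2),
        ((f p.1 + g p.1) * (f p.2 + g p.2)) ⊗ₜ[k] b11 (b p.1) (b p.2) =
          (f p.1 * f p.2) ⊗ₜ[k] b11 (b p.1) (b p.2) +
          ((f p.1 * g p.2) ⊗ₜ[k] b11 (b p.1) (b p.2) +
            (f p.2 * g p.1) ⊗ₜ[k] b11 (b p.2) (b p.1)) +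
          (g p.1 * g p.2) ⊗ₜ[k] b11 (b p.1) (b p.2) := by
      intro p _
      rw [hb11symm (b p.2) (b p.1)]
      rw [show (f p.1 + g p.1) * (f p.2 + g p.2)
          = f p.1 * f p.2 + (f p.1 * g p.2 + f p.2 * g p.1) + g p.1 * g p.2 by ring]
      rw [TensorProduct.add_tmul, TensorProduct.add_tmul, TensorProduct.add_tmul]
    rw [Finset.sum_congr rfl hsingle, Finset.sum_congr rfl hpair]
    simp only [Finset.sum_add_distrib]
    abel
  -- value on `1 ⊗ v`
  have Hone : ∀ v : g1, q ((1 : R) ⊗ₜ[k] v) = (1 : R) ⊗ₜ[k] sq v := by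
    intro v
    set a := b.repr v with hadef
    have hv : v = ∑ i ∈ a.support, a i • b i := by
      conv_lhs => rw [← b.linearCombination_repr v]
      rw [Finsupp.linearCombination_apply, Finsupp.sum]
    have h1 : (1 : R) ⊗ₜ[k] v = ∑ i ∈ a.support, (algebraMap k R (a i)) ⊗ₜ[k] b i := by
      conv_lhs => rw [hv]
      rw [TensorProduct.tmul_sum]
      refine Finset.sum_congr rfl fun i _ => ?_
      rw [TensorProduct.tmul_smul, TensorProduct.smul_tmul', Algebra.smul_def, mul_one]
    rw [h1, Lq]
    have hsqv : sq v = (∑ i ∈ a.support, (a i * a i) • sq (b i)) +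
        ∑ p ∈ (a.support ×ˢ a.support).filter (fun p => p.1 < p.2),
          (a p.1 * a p.2) • b11 (b p.1) (b p.2) := by
      conv_lhs => rw [hv]
      exact quad_map_sum_smul b11 hb11symm sq hsq2 hsq1 a.support (fun i => a i) (fun i => b i)
    rw [hsqv, TensorProduct.tmul_add, TensorProduct.tmul_sum, TensorProduct.tmul_sum]
    congr 1
    · refine Finset.sum_congr rfl fun i _ => ?_
      rw [TensorProduct.tmul_smul, TensorProduct.smul_tmul', Algebra.smul_def, mul_one, map_mul]
    · refine Finset.sum_congr rfl fun p _ => ?_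
      rw [TensorProduct.tmul_smul, TensorProduct.smul_tmul', Algebra.smul_def, mul_one, map_mul]
  -- the defining formula for all presentations
  have bullet1 : ∀ (n : ℕ) (c : Fin n → R) (vv : Fin n → g1),
      q (∑ i, (c i) ⊗ₜ[k] (vv i)) =
        (∑ i, (c i * c i) ⊗ₜ[k] sq (vv i)) +
        ∑ p ∈ Finset.univ.filter (fun p : Fin n × Fin n => p.1 < p.2),
          (c p.1 * c p.2) ⊗ₜ[k] b11 (vv p.1) (vv p.2) := by
    intro n c vv
    rw [Finset.sum_congr rfl fun i (_ : i ∈ Finset.univ) =>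
      show c i ⊗ₜ[k] vv i = c i • ((1 : R) ⊗ₜ[k] vv i) by
        rw [TensorProduct.smul_tmul', smul_eq_mul, mul_one]]
    rw [quad_map_sum_smul B11 HB11symm q Hadd Hscale Finset.univ c
      (fun i => (1 : R) ⊗ₜ[k] vv i)]
    congr 1
    · refine Finset.sum_congr rfl fun i _ => ?_
      rw [Hone, TensorProduct.smul_tmul', smul_eq_mul, mul_one]
    · refine Finset.sum_congr (by ext p; simp) fun p _ => ?_
      rw [hB11, one_mul, TensorProduct.smul_tmul', smul_eq_mul, mul_one]
  -- existence of presentations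
  have hrep : ∀ u : R ⊗[k] g1, ∃ (n : ℕ) (c : Fin n → R) (vv : Fin n → g1),
      u = ∑ i, c i ⊗ₜ[k] vv i := by
    intro u
    set f := bR.repr u with hfd
    have hu : u = ∑ i ∈ f.support, f i ⊗ₜ[k] b i := hrepsum u _ (subset_refl _)
    refine ⟨f.support.card, fun j => f ((f.support.orderIsoOfFin rfl) j),
      fun j => b ((f.support.orderIsoOfFin rfl) j), ?_⟩
    rw [hu, ← Finset.sum_coe_sort f.support (fun i => f i ⊗ₜ[k] b i)]
    exact (Equiv.sum_comp (f.support.orderIsoOfFin rfl).toEquiv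
      (fun x : f.support => f ↑x ⊗ₜ[k] b ↑x)).symm
  refine ⟨q, bullet1, ?_, Hscale, Hadd, ?_, ?_⟩
  · -- uniqueness
    intro q' hq'
    funext u
    obtain ⟨n, c, vv, hu⟩ := hrep u
    rw [hu, hq' n c vv, bullet1 n c vv]
  · -- compatibility with B00
    intro u x
    obtain ⟨n, c, vv, hu⟩ := hrep u
    induction x using TensorProduct.induction_on with
    | zero => simp
    | tmul d y =>
      have hL : B00 (q u) (d ⊗ₜ[k] y) =
          (∑ i, (c i * c i * d) ⊗ₜ[k] b00 (sq (vv i)) y) +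
          ∑ p ∈ Finset.univ.filter (fun p : Fin n × Fin n => p.1 < p.2),
            (c p.1 * c p.2 * d) ⊗ₜ[k] b00 (b11 (vv p.1) (vv p.2)) y := by
        rw [hu, bullet1, map_add, LinearMap.add_apply, map_sum, map_sum,
          LinearMap.sum_apply, LinearMap.sum_apply]
        congr 1
        · exact Finset.sum_congr rfl fun i _ => hB00 _ _ _ _
        · exact Finset.sum_congr rfl fun p _ => hB00 _ _ _ _
      have hR1 : B10 u (d ⊗ₜ[k] y) = ∑ j, (c j * d) ⊗ₜ[k] b10 (vv j) y := by
        rw [hu, map_sum, LinearMap.sum_apply]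
        exact Finset.sum_congr rfl fun j _ => hB10 _ _ _ _
      have hR : B11 u (B10 u (d ⊗ₜ[k] y)) =
          ∑ i, ∑ j, (c i * (c j * d)) ⊗ₜ[k] b11 (vv i) (b10 (vv j) y) := by
        rw [hR1, hu, map_sum B11 (fun i => c i ⊗ₜ[k] vv i) Finset.univ, LinearMap.sum_apply]
        refine Finset.sum_congr rfl fun i _ => ?_
        rw [map_sum]
        exact Finset.sum_congr rfl fun j _ => hB11 _ _ _ _
      rw [hL, hR, double_sum_split]
      congr 1
      · refine Finset.sum_congr rfl fun i _ => ?_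
        rw [hsq3, mul_assoc]
      · refine Finset.sum_congr (by ext p; simp) fun p _ => ?_
        rw [hsq3', TensorProduct.tmul_add]
        congr 1
        · rw [mul_assoc]
        · congr 1
          ring
    | add x₁ x₂ h1 h2 =>
      simp only [map_add]
      rw [h1, h2]
  · -- compatibility with B10
    intro u w
    obtain ⟨n, c, vv, hu⟩ := hrep u
    induction w using TensorProduct.induction_on with
    | zero => simp
    | tmul d w₁ =>
      have hL : B10 (d ⊗ₜ[k] w₁) (q u) =
          (∑ i, (d * (c i * c i)) ⊗ₜ[k] b10 w₁ (sq (vv i))) +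
          ∑ p ∈ Finset.univ.filter (fun p : Fin n × Fin n => p.1 < p.2),
            (d * (c p.1 * c p.2)) ⊗ₜ[k] b10 w₁ (b11 (vv p.1) (vv p.2)) := by
        rw [hu, bullet1, map_add, map_sum, map_sum]
        congr 1
        · exact Finset.sum_congr rfl fun i _ => hB10 _ _ _ _
        · exact Finset.sum_congr rfl fun p _ => hB10 _ _ _ _
      have hR1 : B11 u (d ⊗ₜ[k] w₁) = ∑ j, (c j * d) ⊗ₜ[k] b11 (vv j) w₁ := by
        rw [hu, map_sum, LinearMap.sum_apply]
        exact Finset.sum_congr rfl fun j _ => hB11 _ _ _ _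
      have hR : B10 u (B11 u (d ⊗ₜ[k] w₁)) =
          ∑ i, ∑ j, (c i * (c j * d)) ⊗ₜ[k] b10 (vv i) (b11 (vv j) w₁) := by
        rw [hR1, hu, map_sum B10 (fun i => c i ⊗ₜ[k] vv i) Finset.univ, LinearMap.sum_apply]
        refine Finset.sum_congr rfl fun i _ => ?_
        rw [map_sum]
        exact Finset.sum_congr rfl fun j _ => hB10 _ _ _ _
      rw [hL, hR, double_sum_split, neg_add,
        ← Finset.sum_neg_distrib, ← Finset.sum_neg_distrib]
      congr 1
      · refine Finset.sum_congr rfl fun i _ => ?_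
        rw [← TensorProduct.tmul_neg, hsq4]
        congr 1
        ring
      · refine Finset.sum_congr (by ext p; simp) fun p _ => ?_
        rw [← TensorProduct.tmul_neg, hsq4', TensorProduct.tmul_add]
        congr 1
        · congr 1
          ring
        · congr 1
          ring
    | add w₁ w₂ h1 h2 =>
      simp only [map_add, LinearMap.add_apply, neg_add]
      rw [h1, h2]
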